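/- arXiv:1512.01645 — 2 statements merged into one kernel-verified Lean document; each statement's English description precedes it below -/
import Mathlib

section
/- Let a, b, c, d, p be points of ℝ³ such that {a, b, d} and {a, b, c} are each linearly independent. Suppose: (i) c and the origin 0 lie strictly on opposite sides of the affine span of {a, b, d}; (ii) p and 0 lie strictly on the same side of the affine span of {a, b, d}; and (iii) p and c lie weakly on the same side of the plane through 0, a, b (the affine span of {0, a, b}). Then p and 0 lie strictly on the same side of the affine span of {a, b, c}. (This is the key geometric step used in the proofs of both the paper's Proposition that local convexity at every face implies global convexity, and its Theorem that the edge flipping algorithm terminates: in the half-space of the plane through o, a, b containing c and p, if the face abc lies above the face abd and p lies below abd, then p lies below abc.) -/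
open Finset

/-- Level set of a linear functional as an affine subspace. -/
private noncomputable def lvl (f : (Fin 3 → ℝ) →ₗ[ℝ] ℝ) (r : ℝ) :
    AffineSubspace ℝ (Fin 3 → ℝ) where
  carrier := {x | f x = r}
  smul_vsub_vadd_mem' := by
    intro t p₁ p₂ p₃ h₁ h₂ h₃
    simp only [Set.mem_setOf_eq] at *
    simp [vsub_eq_sub, vadd_eq_add, map_add, map_smul, map_sub, h₁, h₂, h₃]

private lemma range_vec (a b d : Fin 3 → ℝ) :
    Set.range ![a, b, d] = ({a, b, d} : Set (Fin 3 → ℝ)) := by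
  rw [Matrix.range_cons, Matrix.range_cons, Matrix.range_cons_empty]
  ext x; simp; tauto

private lemma sumCoords_eq (B : Module.Basis (Fin 3) ℝ (Fin 3 → ℝ)) (x : Fin 3 → ℝ) :
    B.sumCoords x = B.repr x 0 + B.repr x 1 + B.repr x 2 := by
  have := congrFun B.coe_sumCoords_of_fintype x
  simp only [LinearMap.sum_apply] at this
  rw [this, Fin.sum_univ_three]
  simp [Module.Basis.coord_apply]

private lemma span_char (a b d : Fin 3 → ℝ)
    (B : Module.Basis (Fin 3) ℝ (Fin 3 → ℝ)) (hB : ⇑B = ![a, b, d]) (x : Fin 3 → ℝ) :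
    x ∈ affineSpan ℝ ({a, b, d} : Set (Fin 3 → ℝ)) ↔ B.sumCoords x = 1 := by
  constructor
  · intro hx
    have hle : affineSpan ℝ ({a, b, d} : Set (Fin 3 → ℝ)) ≤ lvl B.sumCoords 1 := by
      rw [affineSpan_le]
      intro y hy
      show B.sumCoords y = 1
      rcases hy with rfl | rfl | rfl
      · have h0 : y = B 0 := by rw [hB]; rfl
        rw [h0, Module.Basis.sumCoords_self_apply]
      · have h0 : y = B 1 := by rw [hB]; rfl
        rw [h0, Module.Basis.sumCoords_self_apply]
      · have h0 : y = B 2 := by rw [hB]; rfl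
        rw [h0, Module.Basis.sumCoords_self_apply]
    exact hle hx
  · intro hx
    have hw : ∑ i, B.repr x i = 1 := by
      rw [Fin.sum_univ_three]
      rw [sumCoords_eq] at hx; exact hx
    have hmem := affineCombination_mem_affineSpan (k := ℝ) (s := Finset.univ)
      (w := fun i => B.repr x i) hw ![a, b, d]
    rw [Finset.affineCombination_eq_linear_combination _ _ _ hw] at hmem
    rw [range_vec] at hmem
    have hx' : ∑ i, B.repr x i • ![a, b, d] i = x := by
      rw [← hB]; exact B.sum_repr x
    rwa [hx'] at hmem

private lemma key_ray {u w r₁ r₂ : ℝ} (h1 : 0 < r₁) (h2 : 0 < r₂)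
    (he : r₁ * u = r₂ * w) : 0 ≤ u * w := by
  have h3 : r₁ * u * (r₂ * w) = (r₁ * u) ^ 2 := by rw [← he]; ring
  nlinarith [sq_nonneg (r₁ * u), mul_pos h1 h2]

private lemma wSameSide_mul_nonneg {s : AffineSubspace ℝ (Fin 3 → ℝ)}
    {f : (Fin 3 → ℝ) →ₗ[ℝ] ℝ} {r : ℝ} (h : ∀ x ∈ s, f x = r) {x y : Fin 3 → ℝ}
    (hxy : s.WSameSide x y) : 0 ≤ (f x - r) * (f y - r) := by
  obtain ⟨p₁, h₁, p₂, h₂, hray⟩ := hxy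
  have hray' := hray.map f
  have e1 : f (x -ᵥ p₁) = f x - r := by rw [vsub_eq_sub, map_sub, h _ h₁]
  have e2 : f (y -ᵥ p₂) = f y - r := by rw [vsub_eq_sub, map_sub, h _ h₂]
  rw [e1, e2] at hray'
  rcases hray' with h0 | h0 | ⟨r₁, r₂, hr₁, hr₂, hr⟩
  · rw [h0, zero_mul]
  · rw [h0, mul_zero]
  · simp only [smul_eq_mul] at hr
    exact key_ray hr₁ hr₂ hr

private lemma wOppSide_mul_nonpos {s : AffineSubspace ℝ (Fin 3 → ℝ)}
    {f : (Fin 3 → ℝ) →ₗ[ℝ] ℝ} {r : ℝ} (h : ∀ x ∈ s, f x = r) {x y : Fin 3 → ℝ}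
    (hxy : s.WOppSide x y) : (f x - r) * (f y - r) ≤ 0 := by
  obtain ⟨p₁, h₁, p₂, h₂, hray⟩ := hxy
  have hray' := hray.map f
  have e1 : f (x -ᵥ p₁) = f x - r := by rw [vsub_eq_sub, map_sub, h _ h₁]
  have e2 : f (p₂ -ᵥ y) = r - f y := by rw [vsub_eq_sub, map_sub, h _ h₂]
  rw [e1, e2] at hray'
  rcases hray' with h0 | h0 | ⟨r₁, r₂, hr₁, hr₂, hr⟩
  · rw [h0, zero_mul]
  · have h1 : f y - r = 0 := by have := sub_eq_zero.mp h0; linarith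
    rw [h1, mul_zero]
  · simp only [smul_eq_mul] at hr
    nlinarith [key_ray hr₁ hr₂ hr]

private lemma sSameSide_of {s : AffineSubspace ℝ (Fin 3 → ℝ)}
    {f : (Fin 3 → ℝ) →ₗ[ℝ] ℝ} (h : ∀ x, x ∈ s ↔ f x = 1) {v : Fin 3 → ℝ} (hv : f v = 1)
    {x y : Fin 3 → ℝ} (hx : f x < 1) (hy : f y < 1) : s.SSameSide x y := by
  refine ⟨⟨x - (f x - 1) • v, ?_, y - (f y - 1) • v, ?_, ?_⟩, ?_, ?_⟩
  · rw [h]; simp [map_sub, map_smul, hv]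
  · rw [h]; simp [map_sub, map_smul, hv]
  · have e1 : x -ᵥ (x - (f x - 1) • v) = (f x - 1) • v := by
      rw [vsub_eq_sub]; abel
    have e2 : y -ᵥ (y - (f y - 1) • v) = (f y - 1) • v := by
      rw [vsub_eq_sub]; abel
    rw [e1, e2]
    refine Or.inr (Or.inr ⟨1 - f y, 1 - f x, by linarith, by linarith, ?_⟩)
    rw [smul_smul, smul_smul]
    congr 1; ring
  · rw [h]; exact ne_of_lt hx
  · rw [h]; exact ne_of_lt hy

set_option maxHeartbeats 1000000 in
/-- Key geometric step: if `{a, b, d}` and `{a, b, c}` are each linearly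
independent, `c` lies above the face `abd` (strictly opposite side from the
origin), `p` lies below the face `abd` (strictly same side as the origin), and
`p` and `c` lie weakly on the same side of the plane through `0, a, b`, then `p`
lies below the face `abc`. -/
theorem below_of_below_neighbour (a b c d p : Fin 3 → ℝ)
    (habd : LinearIndependent ℝ ![a, b, d])
    (habc : LinearIndependent ℝ ![a, b, c])
    (hc : (affineSpan ℝ {a, b, d}).SOppSide c 0)
    (hp : (affineSpan ℝ {a, b, d}).SSameSide p 0)
    (hside : (affineSpan ℝ {(0 : Fin 3 → ℝ), a, b}).WSameSide p c) :
    (affineSpan ℝ {a, b, c}).SSameSide p 0 := by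
  have hcard : Fintype.card (Fin 3) = Module.finrank ℝ (Fin 3 → ℝ) := by
    simp [Module.finrank_fintype_fun_eq_card]
  obtain ⟨B, hB⟩ : ∃ B : Module.Basis (Fin 3) ℝ (Fin 3 → ℝ), ⇑B = ![a, b, d] :=
    ⟨basisOfLinearIndependentOfCardEqFinrank habd hcard,
      coe_basisOfLinearIndependentOfCardEqFinrank habd hcard⟩
  obtain ⟨C, hC⟩ : ∃ C : Module.Basis (Fin 3) ℝ (Fin 3 → ℝ), ⇑C = ![a, b, c] :=
    ⟨basisOfLinearIndependentOfCardEqFinrank habc hcard,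
      coe_basisOfLinearIndependentOfCardEqFinrank habc hcard⟩
  have hmemB := span_char a b d B hB
  have hmemC := span_char a b c C hC
  have hBa : B 0 = a := by rw [hB]; rfl
  have hBb : B 1 = b := by rw [hB]; rfl
  have hBd : B 2 = d := by rw [hB]; rfl
  set f := B.sumCoords with hfdef
  set h := C.sumCoords with hhdef
  set g := B.coord 2 with hgdef
  have hf0 : f (0 : Fin 3 → ℝ) = 0 := map_zero f
  have hh0 : h (0 : Fin 3 → ℝ) = 0 := map_zero h
  have hg0 : g (0 : Fin 3 → ℝ) = 0 := map_zero g
  -- from hc : f c > 1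
  have hfc : 1 < f c := by
    have hw := wOppSide_mul_nonpos (f := f) (r := 1)
      (fun x hx => (hmemB x).mp hx) hc.1
    have hcne : f c ≠ 1 := fun hne => hc.2.1 ((hmemB c).mpr hne)
    rw [hf0] at hw
    rcases lt_or_gt_of_ne hcne with hlt | hgt
    · nlinarith
    · exact hgt
  -- from hp : f p < 1
  have hfp : f p < 1 := by
    have hw := wSameSide_mul_nonneg (f := f) (r := 1)
      (fun x hx => (hmemB x).mp hx) hp.1
    have hpne : f p ≠ 1 := fun hne => hp.2.1 ((hmemB p).mpr hne)
    rw [hf0] at hw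
    rcases lt_or_gt_of_ne hpne with hlt | hgt
    · exact hlt
    · nlinarith
  -- g vanishes on affineSpan {0, a, b}
  have hgspan : ∀ x ∈ affineSpan ℝ ({(0 : Fin 3 → ℝ), a, b} : Set (Fin 3 → ℝ)), g x = 0 := by
    have hle : affineSpan ℝ ({(0 : Fin 3 → ℝ), a, b} : Set (Fin 3 → ℝ)) ≤ lvl g 0 := by
      rw [affineSpan_le]
      intro y hy
      show g y = 0
      rcases hy with rfl | rfl | rfl
      · exact hg0
      · rw [hgdef, Module.Basis.coord_apply, ← hBa, Module.Basis.repr_self]; simp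
      · rw [hgdef, Module.Basis.coord_apply, ← hBb, Module.Basis.repr_self]; simp
    intro x hx
    exact hle hx
  have hgpc : 0 ≤ g p * g c := by
    have := wSameSide_mul_nonneg (f := g) (r := 0) hgspan hside
    simpa using this
  -- expansion lemma
  have expand : ∀ (ψ : (Fin 3 → ℝ) →ₗ[ℝ] ℝ) (x : Fin 3 → ℝ),
      ψ x = B.repr x 0 * ψ a + B.repr x 1 * ψ b + B.repr x 2 * ψ d := by
    intro ψ x
    conv_lhs => rw [← B.sum_repr x]
    rw [map_sum, Fin.sum_univ_three, hBa, hBb, hBd]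
    simp [smul_eq_mul]
  have hfval : ∀ x : Fin 3 → ℝ, f x = B.repr x 0 + B.repr x 1 + B.repr x 2 :=
    fun x => sumCoords_eq B x
  have hgval : ∀ x : Fin 3 → ℝ, g x = B.repr x 2 := by
    intro x; rw [hgdef, Module.Basis.coord_apply]
  -- h values on a b c
  have hha : h a = 1 := by
    rw [hhdef, ← show C 0 = a from by rw [hC]; rfl, Module.Basis.sumCoords_self_apply]
  have hhb : h b = 1 := by
    rw [hhdef, ← show C 1 = b from by rw [hC]; rfl, Module.Basis.sumCoords_self_apply]
  have hhc : h c = 1 := by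
    rw [hhdef, ← show C 2 = c from by rw [hC]; rfl, Module.Basis.sumCoords_self_apply]
  -- gamma ≠ 0
  have hγ : B.repr c 2 ≠ 0 := by
    intro h0
    have hcab : B.repr c 0 • a + B.repr c 1 • b - c = 0 := by
      rw [sub_eq_zero]
      conv_rhs => rw [← B.sum_repr c]
      rw [Fin.sum_univ_three, hBa, hBb, hBd, h0, zero_smul, add_zero]
    have hli := Fintype.linearIndependent_iff.mp habc ![B.repr c 0, B.repr c 1, -1]
    have hsum : ∑ i, ![B.repr c 0, B.repr c 1, -1] i • ![a, b, c] i = 0 := by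
      rw [Fin.sum_univ_three]
      simp only [Matrix.cons_val_zero, Matrix.cons_val_one, Matrix.head_cons,
        Matrix.cons_val_two, Matrix.tail_cons]
      rw [neg_one_smul, ← sub_eq_add_neg]
      exact hcab
    have := hli hsum 2
    norm_num [Matrix.cons_val_two, Matrix.tail_cons, Matrix.head_cons] at this
  -- key inequality: h p < 1
  have hhp : h p < 1 := by
    have hc2 := expand h c
    have hp2 := expand h p
    rw [hha, hhb, hhc] at hc2
    rw [hha, hhb] at hp2
    set α := B.repr c 0
    set β := B.repr c 1
    set γ := B.repr c 2
    set x := B.repr p 0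
    set y := B.repr p 1
    set z := B.repr p 2
    have hfc' : 1 < α + β + γ := by rw [hfval c] at hfc; exact hfc
    have hfp' : x + y + z < 1 := by rw [hfval p] at hfp; exact hfp
    have hzγ : 0 ≤ z * γ := by
      rw [hgval p, hgval c] at hgpc; exact hgpc
    have hγsq : 0 < γ ^ 2 := by positivity
    rw [hp2]
    have hkey : 0 ≤ z * γ * (γ * (1 - h d)) := mul_nonneg hzγ (by nlinarith)
    nlinarith [hkey, hγsq, hfp', mul_pos hγsq hγsq]
  exact sSameSide_of hmemC hha hhp (by rw [hh0]; norm_num)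
end

section
/- Let a, b, c, d be points of ℝ³ such that {a, b, c} is linearly independent and b and d lie strictly on opposite sides of the plane through 0, a, c (the affine span of {0, a, c}). Then d and the origin 0 lie strictly on the same side of the affine span of {a, b, c} if and only if b and 0 lie strictly on the same side of the affine span of {a, c, d}. (This symmetry of admissibility for an edge flip across the edge ac of the quadrilateral with vertices a, b, c, d on the light-cone is used in the proof of the paper's Theorem that the algorithm terminates in finitely many iterations: the vertices b̃ and d̃ contribute to the heights of the faces ãc̃d̃ and ãb̃c̃ before the edge flip.) -/
open Module

private lemma pair_li {u v : Fin 3 → ℝ} (f g : (Fin 3 → ℝ) →ₗ[ℝ] ℝ)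
    (hfu : f u = 0) (hfv : f v ≠ 0) (hgu : g u ≠ 0) :
    LinearIndependent ℝ ![u, v] := by
  rw [LinearIndependent.pair_iff]
  intro s t hst
  have h1 : t * f v = 0 := by
    have := congrArg f hst
    simpa [map_add, map_smul, hfu] using this
  have ht : t = 0 := by
    rcases mul_eq_zero.1 h1 with h | h
    · exact h
    · exact absurd h hfv
  subst ht
  have h2 : s * g u = 0 := by
    have := congrArg g hst
    simpa [map_add, map_smul] using this
  rcases mul_eq_zero.1 h2 with h | h
  · exact ⟨h, rfl⟩
  · exact absurd h hgu

private lemma span_eq_mk' (g : (Fin 3 → ℝ) →ₗ[ℝ] ℝ) (hg : Function.Surjective g)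
    (p q r : Fin 3 → ℝ) (h : LinearIndependent ℝ ![q - p, r - p])
    (hq : g (q - p) = 0) (hr : g (r - p) = 0) :
    affineSpan ℝ {p, q, r} = AffineSubspace.mk' p (LinearMap.ker g) := by
  have hple : affineSpan ℝ {p, q, r} ≤ AffineSubspace.mk' p (LinearMap.ker g) := by
    refine affineSpan_le.2 ?_
    rintro x (rfl | rfl | rfl) <;>
      · rw [SetLike.mem_coe, AffineSubspace.mem_mk', LinearMap.mem_ker]
        simp [vsub_eq_sub, hq, hr]
  have hker : finrank ℝ (LinearMap.ker g) = 2 := by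
    have h1 := g.finrank_range_add_finrank_ker
    rw [LinearMap.range_eq_top.2 hg, finrank_top] at h1
    simp only [finrank_self] at h1
    have h3 : finrank ℝ (Fin 3 → ℝ) = 3 := by simp
    omega
  have hdle : (affineSpan ℝ {p, q, r}).direction ≤ LinearMap.ker g := by
    have := AffineSubspace.direction_le hple
    rwa [AffineSubspace.direction_mk'] at this
  have hpm : p ∈ affineSpan ℝ {p, q, r} := mem_affineSpan ℝ (by simp)
  have hqmem : q - p ∈ (affineSpan ℝ {p, q, r}).direction := by
    have := AffineSubspace.vsub_mem_direction (mem_affineSpan ℝ (show q ∈ ({p,q,r} : Set _) by simp)) hpm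
    simpa [vsub_eq_sub] using this
  have hrmem : r - p ∈ (affineSpan ℝ {p, q, r}).direction := by
    have := AffineSubspace.vsub_mem_direction (mem_affineSpan ℝ (show r ∈ ({p,q,r} : Set _) by simp)) hpm
    simpa [vsub_eq_sub] using this
  have hspan : Submodule.span ℝ {q - p, r - p} ≤ (affineSpan ℝ {p, q, r}).direction := by
    rw [Submodule.span_le]
    rintro x (rfl | rfl)
    · exact hqmem
    · exact hrmem
  have hfr2 : finrank ℝ (Submodule.span ℝ ({q - p, r - p} : Set (Fin 3 → ℝ))) = 2 := by
    have h2 := finrank_span_eq_card h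
    have hrange : Set.range ![q - p, r - p] = {q - p, r - p} := by
      ext x
      simp [Matrix.range_cons, Matrix.range_empty]
      tauto
    rw [hrange] at h2
    simpa using h2
  have hdir : (affineSpan ℝ {p, q, r}).direction = LinearMap.ker g := by
    refine Submodule.eq_of_le_of_finrank_le hdle ?_
    rw [hker, ← hfr2]
    exact Submodule.finrank_mono hspan
  exact AffineSubspace.ext_of_direction_eq (by rw [hdir, AffineSubspace.direction_mk'])
    ⟨p, hpm, AffineSubspace.self_mem_mk' _ _⟩

private lemma ssameside_iff (g : (Fin 3 → ℝ) →ₗ[ℝ] ℝ) (p v : Fin 3 → ℝ) (hp : g p = 1) :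
    (AffineSubspace.mk' p (LinearMap.ker g)).SSameSide v 0 ↔ g v < 1 := by
  have hmem : ∀ x : Fin 3 → ℝ, x ∈ AffineSubspace.mk' p (LinearMap.ker g) ↔ g x = 1 := by
    intro x
    rw [AffineSubspace.mem_mk', LinearMap.mem_ker]
    simp [vsub_eq_sub, map_sub, hp, sub_eq_zero]
  constructor
  · rintro ⟨⟨p₁, hp₁, p₂, hp₂, hray⟩, hv, h0⟩
    have h1 := hray.map g
    rw [vsub_eq_sub, vsub_eq_sub, map_sub, map_sub, (hmem p₁).1 hp₁, (hmem p₂).1 hp₂,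
      map_zero] at h1
    have hvne : g v - 1 ≠ 0 := sub_ne_zero.2 fun h => hv ((hmem v).2 h)
    rcases h1 with h | h | ⟨r, t, hr, ht, hrt⟩
    · exact absurd h hvne
    · norm_num at h
    · simp only [smul_eq_mul] at hrt
      nlinarith
  · intro hv
    refine ⟨⟨v + (1 - g v) • p, (hmem _).2 (by simp [map_add, map_smul, hp]), p,
      (hmem p).2 hp, ?_⟩, fun h => by linarith [(hmem v).1 h], fun h => by
        have := (hmem 0).1 h; simp at this⟩
    have heq : v -ᵥ (v + (1 - g v) • p) = (1 - g v) • ((0 : Fin 3 → ℝ) -ᵥ p) := by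
      simp [vsub_eq_sub, smul_sub]
    rw [heq]
    exact SameRay.sameRay_nonneg_smul_left _ (by linarith)

set_option maxHeartbeats 1000000 in
/-- Symmetry of admissibility of an edge flip: if `{a, b, c}` is linearly
independent and `b`, `d` lie strictly on opposite sides of the plane through
`0, a, c`, then `d` lies below the face `abc` iff `b` lies below the face
`acd`. -/
theorem flip_admissible_symm (a b c d : Fin 3 → ℝ)
    (habc : LinearIndependent ℝ ![a, b, c])
    (hbd : (affineSpan ℝ {(0 : Fin 3 → ℝ), a, c}).SOppSide b d) :
    ((affineSpan ℝ {a, b, c}).SSameSide d 0 ↔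
      (affineSpan ℝ {a, c, d}).SSameSide b 0) := by
  classical
  have hcard : Fintype.card (Fin 3) = finrank ℝ (Fin 3 → ℝ) := by simp
  obtain ⟨B, hB⟩ : ∃ B : Basis (Fin 3) ℝ (Fin 3 → ℝ), ∀ i, B i = ![a, b, c] i :=
    ⟨basisOfLinearIndependentOfCardEqFinrank habc hcard, fun i => by
      rw [coe_basisOfLinearIndependentOfCardEqFinrank]⟩
  have hco : ∀ i j : Fin 3, B.coord i (![a, b, c] j) = if j = i then 1 else 0 := by
    intro i j
    rw [← hB j, Basis.coord_apply, Basis.repr_self, Finsupp.single_apply]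
  have hcoa : ∀ i, B.coord i a = if (0 : Fin 3) = i then 1 else 0 := fun i => hco i 0
  have hcob : ∀ i, B.coord i b = if (1 : Fin 3) = i then 1 else 0 := fun i => hco i 1
  have hcoc : ∀ i, B.coord i c = if (2 : Fin 3) = i then 1 else 0 := fun i => hco i 2
  set f : (Fin 3 → ℝ) →ₗ[ℝ] ℝ := B.coord 0 + B.coord 1 + B.coord 2 with hf
  set φ : (Fin 3 → ℝ) →ₗ[ℝ] ℝ := B.coord 1 with hφ
  have hfa : f a = 1 := by simp [hf, hφ, hcoa]
  have hfb : f b = 1 := by simp [hf, hφ, hcob]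
  have hfc : f c = 1 := by simp [hf, hφ, hcoc]
  have hφa : φ a = 0 := by simp [hφ, hcoa]
  have hφb : φ b = 1 := by simp [hφ, hcob]
  have hφc : φ c = 0 := by simp [hφ, hcoc]
  have hc2a : B.coord 2 a = 0 := by simp [hcoa]
  have hc2b : B.coord 2 b = 0 := by simp [hcob]
  have hc2c : B.coord 2 c = 1 := by simp [hcoc]
  have hc0a : B.coord 0 a = 1 := by simp [hcoa]
  -- the plane through 0, a, c
  have hs0 : affineSpan ℝ {(0 : Fin 3 → ℝ), a, c} =
      AffineSubspace.mk' (0 : Fin 3 → ℝ) (LinearMap.ker φ) := by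
    refine span_eq_mk' φ (fun r => ⟨r • b, by simp [map_smul, hφb]⟩) _ _ _ ?_ ?_ ?_
    · refine pair_li (B.coord 2) (B.coord 0) ?_ ?_ ?_
      · rw [sub_zero, hc2a]
      · rw [sub_zero, hc2c]; norm_num
      · rw [sub_zero, hc0a]; norm_num
    · rw [sub_zero, hφa]
    · rw [sub_zero, hφc]
  -- extract φ d < 0 from the opposite-side hypothesis
  have hmemφ : ∀ x : Fin 3 → ℝ,
      x ∈ AffineSubspace.mk' (0 : Fin 3 → ℝ) (LinearMap.ker φ) ↔ φ x = 0 := by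
    intro x
    rw [AffineSubspace.mem_mk', LinearMap.mem_ker]
    simp [vsub_eq_sub]
  obtain ⟨⟨p₁, hp₁, p₂, hp₂, hray⟩, hbm, hdm⟩ := hbd
  rw [hs0] at hp₁ hp₂ hdm
  have hφd_ne : φ d ≠ 0 := fun h => hdm ((hmemφ d).2 h)
  have hβ : φ d < 0 := by
    have h1 := hray.map φ
    rw [vsub_eq_sub, vsub_eq_sub, map_sub, map_sub, (hmemφ p₁).1 hp₁, (hmemφ p₂).1 hp₂,
      hφb] at h1
    rcases h1 with h | h | ⟨r, t, hr, ht, hrt⟩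
    · norm_num at h
    · rw [zero_sub, neg_eq_zero] at h
      exact absurd h hφd_ne
    · simp only [smul_eq_mul] at hrt
      nlinarith
  -- the plane through a, b, c
  have hs1 : affineSpan ℝ {a, b, c} = AffineSubspace.mk' a (LinearMap.ker f) := by
    refine span_eq_mk' f (fun r => ⟨r • a, by simp [map_smul, hfa]⟩) _ _ _ ?_ ?_ ?_
    · refine pair_li (B.coord 2) φ ?_ ?_ ?_
      · rw [map_sub, hc2b, hc2a, sub_zero]
      · rw [map_sub, hc2c, hc2a, sub_zero]; norm_num
      · rw [map_sub, hφb, hφa, sub_zero]; norm_num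
    · rw [map_sub, hfb, hfa, sub_self]
    · rw [map_sub, hfc, hfa, sub_self]
  -- the plane through a, c, d
  set g : (Fin 3 → ℝ) →ₗ[ℝ] ℝ := f + ((1 - f d) / φ d) • φ with hg
  have hk : (1 - f d) / φ d * φ d = 1 - f d := div_mul_cancel₀ _ hφd_ne
  have hga : g a = 1 := by simp [hg, hfa, hφa]
  have hgc : g c = 1 := by simp [hg, hfc, hφc]
  have hgd : g d = 1 := by
    simp only [hg, LinearMap.add_apply, LinearMap.smul_apply, smul_eq_mul]
    rw [hk]; ring
  have hs2 : affineSpan ℝ {a, c, d} = AffineSubspace.mk' a (LinearMap.ker g) := by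
    refine span_eq_mk' g (fun r => ⟨r • a, by simp [map_smul, hga]⟩) _ _ _ ?_ ?_ ?_
    · refine pair_li φ (B.coord 2) ?_ ?_ ?_
      · rw [map_sub, hφc, hφa, sub_zero]
      · rw [map_sub, hφa, sub_zero]; exact hφd_ne
      · rw [map_sub, hc2c, hc2a, sub_zero]; norm_num
    · rw [map_sub, hgc, hga, sub_self]
    · rw [map_sub, hgd, hga, sub_self]
  rw [hs1, hs2, ssameside_iff f a d hfa, ssameside_iff g a b hga]
  have hgb : g b = 1 + (1 - f d) / φ d := by
    simp [hg, hfb, hφb]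
  rw [hgb]
  constructor
  · intro h
    have h1 : (1 - f d) / φ d * φ d = 1 - f d := hk
    have h2 : (1 - f d) / φ d < 0 := by nlinarith
    linarith
  · intro h
    have h2 : (1 - f d) / φ d < 0 := by linarith
    nlinarith
end
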